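/- For the analytic function f on the unit disc determined by zf'(z)/f(z) = (1 + z³)/(1 − z³) with f(z) = z + a₂z² + ..., one has a₂ = a₃ = a₅ = 0, a₄ = 2/3, and consequently the third Hankel determinant H₃(1) = a₃(a₂a₄ − a₃²) − a₄(a₄ − a₂a₃) + a₅(a₃ − a₂²) equals −4/9. -/

import Mathlib

set_option maxHeartbeats 1000000

open Metric

open FormalMultilinearSeries in
lemma hasFPowerSeriesOnBall_of_hasSum' {c : ℕ → ℂ} {g : ℂ → ℂ}
    (h : ∀ z ∈ ball (0:ℂ) 1, HasSum (fun n => c n * z ^ n) (g z)) :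
    HasFPowerSeriesOnBall g (FormalMultilinearSeries.ofScalars ℂ c) 0 1 := by
  have hmem : ∀ y : ℂ, y ∈ Metric.eball (0:ℂ) 1 → y ∈ ball (0:ℂ) 1 := by
    intro y hy
    rw [EMetric.mem_ball, edist_zero_right, enorm_eq_nnnorm, ← ENNReal.coe_one, ENNReal.coe_lt_coe] at hy
    rw [mem_ball_zero_iff]
    exact_mod_cast hy
  constructor
  · refine ENNReal.le_of_forall_nnreal_lt fun r hr => ?_
    have hr1 : (r : ℝ) < 1 := by exact_mod_cast hr
    have hz : ((r : ℝ) : ℂ) ∈ ball (0:ℂ) 1 := by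
      rw [mem_ball_zero_iff]
      simpa [abs_of_nonneg r.coe_nonneg] using hr1
    have hs : Filter.Tendsto (fun n => ‖c n * ((r : ℝ) : ℂ) ^ n‖) Filter.atTop (nhds 0) := by
      simpa using ((h _ hz).summable.tendsto_atTop_zero).norm
    apply FormalMultilinearSeries.le_radius_of_tendsto _ (l := 0)
    convert hs using 2 with n
    rw [ofScalars_norm]
    simp [abs_of_nonneg r.coe_nonneg]
  · exact one_pos
  · intro y hy
    simp only [FormalMultilinearSeries.ofScalars_apply_eq, smul_eq_mul, zero_add]
    exact h y (hmem y hy)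

theorem extremal_starlike (f : ℂ → ℂ) (a : ℕ → ℂ)
    (ha0 : a 0 = 0) (ha1 : a 1 = 1)
    (hsum : ∀ z ∈ ball (0:ℂ) 1, HasSum (fun n => a n * z ^ n) (f z))
    (hdiff : DifferentiableOn ℂ f (ball (0:ℂ) 1))
    (hode : ∀ z ∈ ball (0:ℂ) 1, z * deriv f z * (1 - z^3) = f z * (1 + z^3)) :
    a 2 = 0 ∧ a 3 = 0 ∧ a 5 = 0 ∧ a 4 = 2/3 ∧
    a 3 * (a 2 * a 4 - (a 3)^2) - a 4 * (a 4 - a 2 * a 3) + a 5 * (a 3 - (a 2)^2)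
      = -4/9 := by
  set b : ℕ → ℂ := fun n =>
    ((n : ℂ) - 1) * a n - (if 3 ≤ n then (((n - 3 : ℕ) : ℂ) + 1) * a (n - 3) else 0) with hbdef
  have hp := hasFPowerSeriesOnBall_of_hasSum' hsum
  have hder := hp.fderiv
  -- term-by-term derivative: z * f'(z) = ∑ n * a n * z ^ n
  have hzsum : ∀ z ∈ ball (0:ℂ) 1,
      HasSum (fun (n : ℕ) => (n : ℂ) * a n * z ^ n) (z * deriv f z) := by
    intro z hz
    have hz' : z ∈ Metric.eball (0:ℂ) 1 := by
      rw [EMetric.mem_ball, edist_zero_right, enorm_eq_nnnorm, ← ENNReal.coe_one, ENNReal.coe_lt_coe]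
      exact_mod_cast mem_ball_zero_iff.mp hz
    have h1 := hder.hasSum hz'
    have h2 := h1.mapL (ContinuousLinearMap.apply ℂ ℂ z)
    have h3 : ∀ n, (ContinuousLinearMap.apply ℂ ℂ z)
        ((FormalMultilinearSeries.ofScalars ℂ a).derivSeries n (fun _ => z))
        = ((n : ℂ) + 1) * a (n + 1) * z ^ (n + 1) := by
      intro n
      rw [ContinuousLinearMap.apply_apply, FormalMultilinearSeries.derivSeries_apply_diag,
        FormalMultilinearSeries.ofScalars_apply_eq]
      simp only [nsmul_eq_mul, smul_eq_mul]
      push_cast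
      ring
    have h4 : (ContinuousLinearMap.apply ℂ ℂ z) (fderiv ℂ f (0 + z)) = z * deriv f z := by
      rw [ContinuousLinearMap.apply_apply, zero_add]
      calc (fderiv ℂ f z) z = (fderiv ℂ f z) (z • (1 : ℂ)) := by norm_num
        _ = z • ((fderiv ℂ f z) 1) := (fderiv ℂ f z).map_smul z 1
        _ = z * deriv f z := by rw [smul_eq_mul, fderiv_apply_one_eq_deriv]
    rw [h4, funext h3] at h2
    have h5 : HasSum (fun n => ((fun (m : ℕ) => (m : ℂ) * a m * z ^ m) (n + 1))) (z * deriv f z) := by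
      refine h2.congr_fun fun n => ?_
      push_cast
      ring
    have h6 := (hasSum_nat_add_iff (f := fun (m : ℕ) => (m : ℂ) * a m * z ^ m) 1).mp h5
    simpa using h6
  -- combine into single power series summing to 0
  have hmain : ∀ z ∈ ball (0:ℂ) 1, HasSum (fun n => b n * z ^ n) 0 := by
    intro z hz
    have hf := hsum z hz
    have hzf := hzsum z hz
    have hf3 : HasSum (fun n => if 3 ≤ n then a (n - 3) * z ^ n else 0) (f z * z ^ 3) := by
      have h0 := hf.mul_right (z ^ 3)
      have h1 : HasSum (fun n => (fun (m : ℕ) => (if 3 ≤ m then a (m - 3) else 0) * z ^ m) (n + 3))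
          (f z * z ^ 3) := by
        refine h0.congr_fun fun n => ?_
        simp [pow_add]
        ring
      have h2 := (hasSum_nat_add_iff
        (f := fun (m : ℕ) => (if 3 ≤ m then a (m - 3) else 0) * z ^ m) 3).mp h1
      simpa [Finset.sum_range_succ] using h2
    have hzf3 : HasSum (fun n => if 3 ≤ n then ((n - 3 : ℕ) : ℂ) * a (n - 3) * z ^ n else 0)
        (z * deriv f z * z ^ 3) := by
      have h0 := hzf.mul_right (z ^ 3)
      have h1 : HasSum
          (fun n => (fun (m : ℕ) => (if 3 ≤ m then ((m - 3 : ℕ) : ℂ) * a (m - 3) else 0) * z ^ m) (n + 3))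
          (z * deriv f z * z ^ 3) := by
        refine h0.congr_fun fun n => ?_
        simp [pow_add]
        ring
      have h2 := (hasSum_nat_add_iff
        (f := fun (m : ℕ) => (if 3 ≤ m then ((m - 3 : ℕ) : ℂ) * a (m - 3) else 0) * z ^ m) 3).mp h1
      simpa [Finset.sum_range_succ] using h2
    have hfinal := (hzf.sub hzf3).sub (hf.add hf3)
    have hval : z * deriv f z - z * deriv f z * z ^ 3 - (f z + f z * z ^ 3) = 0 := by
      have := hode z hz
      linear_combination this
    rw [hval] at hfinal
    refine hfinal.congr_fun fun n => ?_
    simp only [hbdef]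
    split_ifs with h
    · ring
    · ring
  have hq := hasFPowerSeriesOnBall_of_hasSum' (g := fun _ => (0:ℂ)) hmain
  have hzero : FormalMultilinearSeries.ofScalars ℂ b = 0 :=
    HasFPowerSeriesAt.eq_zero hq.hasFPowerSeriesAt
  have key : ∀ n, b n = 0 := fun n =>
    congrFun ((FormalMultilinearSeries.ofScalars_series_eq_zero ℂ).mp hzero) n
  have k2 := key 2
  have k3 := key 3
  have k4 := key 4
  have k5 := key 5
  simp only [hbdef] at k2 k3 k4 k5
  norm_num at k2 k3 k4 k5
  rw [ha0] at k3
  rw [ha1] at k4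
  have ha2 : a 2 = 0 := by linear_combination k2
  have ha3 : a 3 = 0 := by linear_combination k3 / 2
  have ha4 : a 4 = 2 / 3 := by linear_combination k4 / 3
  have ha5 : a 5 = 0 := by
    rw [ha2] at k5
    linear_combination k5 / 4
  refine ⟨ha2, ha3, ha5, ha4, ?_⟩
  rw [ha2, ha3, ha4, ha5]
  norm_num
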